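/- Let (C, p) be a neutralized Galois category and let π₁(C,p) = Aut(p) be its fundamental group, topologized as a subgroup of the product over all objects X of C of the finite discrete groups Aut(p(X)). Then there is an equivalence of categories between C and the category of finite discrete sets endowed with a continuous left action of π₁(C,p), under which p corresponds (up to natural isomorphism) to the forgetful functor to finite sets. -/

import Mathlib

/-!
STATEMENT 2: A neutralized Galois category (C, p) is equivalent to the category of finite
discrete sets with a continuous left action of its fundamental group π₁(C,p) = Aut p
(topologized as a subgroup of ∏_X Aut (p.obj X)), and under this equivalence p corresponds
to the forgetful functor to finite sets.
-/

open CategoryTheory PreGaloisCategory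

universe u v

/-- The category of finite (discrete) sets endowed with a continuous left action of a
topological group `G`. -/
abbrev ContFinAction (G : Type u) [Group G] [TopologicalSpace G] : Type (u + 1) :=
  CategoryTheory.ObjectProperty.FullSubcategory
    (fun X : Action FintypeCat.{u} G =>
      letI : TopologicalSpace X.V := ⊥
      ContinuousSMul G X.V)

/-- The forgetful functor from continuous finite `G`-sets to finite sets. -/
def forgetContFinAction (G : Type u) [Group G] [TopologicalSpace G] :
    ContFinAction G ⥤ FintypeCat.{u} :=
  ObjectProperty.ι _ ⋙ forget₂ (Action FintypeCat.{u} G) FintypeCat.{u}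

/-- The lift of `functorToAction` to the full subcategory of continuous actions. -/
def liftToContFinAction {C : Type u} [Category.{v} C] [GaloisCategory C]
    (p : C ⥤ FintypeCat.{u}) [FiberFunctor p] : C ⥤ ContFinAction (Aut p) :=
  ObjectProperty.lift _ (functorToAction p)
    (fun X => PreGaloisCategory.continuousSMul_aut_fiber p X)

instance {C : Type u} [Category.{v} C] [GaloisCategory C]
    (p : C ⥤ FintypeCat.{u}) [FiberFunctor p] : (liftToContFinAction p).Full :=
  ObjectProperty.instFullFullSubcategoryLift _ _ _

instance {C : Type u} [Category.{v} C] [GaloisCategory C]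
    (p : C ⥤ FintypeCat.{u}) [FiberFunctor p] : (liftToContFinAction p).Faithful :=
  ObjectProperty.instFaithfulFullSubcategoryLift _ _ _

instance {C : Type u} [Category.{v} C] [GaloisCategory C]
    (p : C ⥤ FintypeCat.{u}) [FiberFunctor p] : (liftToContFinAction p).EssSurj := by
  constructor
  intro Y
  obtain ⟨X, hX⟩ := Y
  letI : TopologicalSpace X.V := ⊥
  haveI : DiscreteTopology X.V := ⟨rfl⟩
  haveI : ContinuousSMul (Aut p) X.V := hX
  obtain ⟨A, ⟨i⟩⟩ := exists_lift_of_continuous (F := p) X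
  exact ⟨A, ⟨(ObjectProperty.ι _).preimageIso i⟩⟩

theorem stmt_2 {C : Type u} [Category.{v} C] [GaloisCategory C]
    (p : C ⥤ FintypeCat.{u}) [FiberFunctor p] :
    ∃ e : C ≌ ContFinAction (Aut p),
      Nonempty (e.functor ⋙ forgetContFinAction (Aut p) ≅ p) := by
  haveI : (liftToContFinAction p).IsEquivalence := { }
  exact ⟨(liftToContFinAction p).asEquivalence, ⟨Iso.refl _⟩⟩
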